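/- Applying the Verlinde formula to the gauged modular data S^eq for labels (XY), (Ẑ₁,ε₁), (Ẑ₂,ε₂) gives N_{(XY),(Ẑ₁,ε₁),(Ẑ₂,ε₂)} = Σ_{W∈I} S_{XW} S_{YW} S_{Z₁W} S_{Z₂W} / S_{0W}², where S = S'/δ is the normalized S-matrix of the original modular data and 0 is the unit label. -/

import Mathlib

/-- Gauged labels of the ℤ/2 permutation gauging: unordered pairs `(XY)` with
`X ≠ Y` (modelled as pairs with `X < Y`), labels `(X,ε)`, and labels `(X̂,ε)`. -/
abbrev GLabel (I : Type) [LinearOrder I] : Type :=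
  {p : I × I // p.1 < p.2} ⊕ (I × Bool) ⊕ (I × Bool)

/-- The sign `ε ∈ {+1, -1}` as a complex number. -/
def sg (ε : Bool) : ℂ := if ε then 1 else -1

/-- The gauged S-matrix `S^eq`, defined blockwise from modular data
`(S', θ)`, a choice of square roots `θ^{1/2}`, `δ = √μ` and `η = p⁺/δ`. -/
noncomputable def gaugedS {I : Type} [LinearOrder I] [Fintype I]
    (S : Matrix I I ℂ) (θ sqrtθ : I → ℂ) (δ η : ℂ) :
    Matrix (GLabel I) (GLabel I) ℂ :=
  Matrix.of fun a b =>
    match a, b with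
    | Sum.inl p, Sum.inl q =>
        2 * (S p.1.1 q.1.1 * S p.1.2 q.1.2 + S p.1.1 q.1.2 * S p.1.2 q.1.1)
    | Sum.inl p, Sum.inr (Sum.inl (Z, _)) => 2 * S p.1.1 Z * S p.1.2 Z
    | Sum.inr (Sum.inl (X, _)), Sum.inl q => 2 * S X q.1.1 * S X q.1.2
    | Sum.inl _, Sum.inr (Sum.inr _) => 0
    | Sum.inr (Sum.inr _), Sum.inl _ => 0
    | Sum.inr (Sum.inl (X, _)), Sum.inr (Sum.inl (Y, _)) => (S X Y) ^ 2
    | Sum.inr (Sum.inl (X, ε₁)), Sum.inr (Sum.inr (Y, _)) => sg ε₁ * δ * S X Y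
    | Sum.inr (Sum.inr (X, _)), Sum.inr (Sum.inl (Y, ε₂)) => sg ε₂ * δ * S Y X
    | Sum.inr (Sum.inr (X, ε₁)), Sum.inr (Sum.inr (Y, ε₂)) =>
        sg ε₁ * sg ε₂ * η⁻¹ * sqrtθ X * sqrtθ Y * (∑ V, S X V * θ V ^ 2 * S V Y)

/-- Gauged Verlinde formula for labels `(XY)`, `(Ẑ₁,ε₁)`, `(Ẑ₂,ε₂)`:
`N_{(XY),(Ẑ₁,ε₁),(Ẑ₂,ε₂)} = Σ_W S_{XW}S_{YW}S_{Z₁W}S_{Z₂W}/S_{0W}²`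
with `S = S'/δ` the normalized S-matrix. -/
theorem gauged_verlinde_pair_hat {I : Type} [LinearOrder I] [Fintype I]
    (one : I) (bar : I → I) (S : Matrix I I ℂ) (d : I → ℝ) (δ : ℝ)
    (θ sqrtθ : I → ℂ) (η : ℂ)
    (hbar : ∀ X, bar (bar X) = X) (hbar1 : bar one = one)
    (hSsymm : S.IsSymm)
    (hd : ∀ X, 0 < d X) (hS1 : ∀ X, S one X = (d X : ℂ))
    (hδ : 0 < δ) (hδ2 : δ ^ 2 = ∑ X, d X ^ 2)
    (hunit : S * S.conjTranspose = ((δ : ℂ) ^ 2) • 1)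
    (hθ1 : θ one = 1) (hθbar : ∀ X, θ (bar X) = θ X) (hθne : ∀ X, θ X ≠ 0)
    (hη_def : η = (∑ X, θ X * (d X : ℂ) ^ 2) / (δ : ℂ))
    (hηabs : ‖η‖ = 1)
    (hs4 : S ^ 4 = ((δ : ℂ) ^ 4) • 1)
    (hst3 : (S * Matrix.diagonal θ) ^ 3 = (η⁻¹ * (δ : ℂ)) • S ^ 2)
    (hsqθ : ∀ X, sqrtθ X ^ 2 = θ X) (hsqθbar : ∀ X, sqrtθ (bar X) = sqrtθ X) :
    ∀ (X Y : I) (hXY : X < Y) (Z₁ Z₂ : I) (ε₁ ε₂ : Bool),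
      ∑ ℓ : GLabel I,
          gaugedS S θ sqrtθ (δ : ℂ) η (Sum.inl ⟨(X, Y), hXY⟩) ℓ *
          gaugedS S θ sqrtθ (δ : ℂ) η (Sum.inr (Sum.inr (Z₁, ε₁))) ℓ *
          gaugedS S θ sqrtθ (δ : ℂ) η (Sum.inr (Sum.inr (Z₂, ε₂))) ℓ /
          ((2 * (δ : ℂ) ^ 2) ^ 2 *
            gaugedS S θ sqrtθ (δ : ℂ) η ℓ (Sum.inr (Sum.inl (one, true))))
      = ∑ W, (S X W / (δ : ℂ)) * (S Y W / (δ : ℂ)) * (S Z₁ W / (δ : ℂ)) *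
          (S Z₂ W / (δ : ℂ)) / (S one W / (δ : ℂ)) ^ 2 := by
  intro X Y hXY Z₁ Z₂ ε₁ ε₂
  have hδ0 : (δ : ℂ) ≠ 0 := Complex.ofReal_ne_zero.mpr hδ.ne'
  rw [Fintype.sum_sum_type, Fintype.sum_sum_type]
  have hz1 : ∀ p : {p : I × I // p.1 < p.2},
      gaugedS S θ sqrtθ (δ : ℂ) η (Sum.inl ⟨(X, Y), hXY⟩) (Sum.inl p) *
      gaugedS S θ sqrtθ (δ : ℂ) η (Sum.inr (Sum.inr (Z₁, ε₁))) (Sum.inl p) *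
      gaugedS S θ sqrtθ (δ : ℂ) η (Sum.inr (Sum.inr (Z₂, ε₂))) (Sum.inl p) /
      ((2 * (δ : ℂ) ^ 2) ^ 2 *
        gaugedS S θ sqrtθ (δ : ℂ) η (Sum.inl p) (Sum.inr (Sum.inl (one, true)))) = 0 := by
    intro p; simp [gaugedS]
  have hz2 : ∀ q : I × Bool,
      gaugedS S θ sqrtθ (δ : ℂ) η (Sum.inl ⟨(X, Y), hXY⟩) (Sum.inr (Sum.inr q)) *
      gaugedS S θ sqrtθ (δ : ℂ) η (Sum.inr (Sum.inr (Z₁, ε₁))) (Sum.inr (Sum.inr q)) *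
      gaugedS S θ sqrtθ (δ : ℂ) η (Sum.inr (Sum.inr (Z₂, ε₂))) (Sum.inr (Sum.inr q)) /
      ((2 * (δ : ℂ) ^ 2) ^ 2 *
        gaugedS S θ sqrtθ (δ : ℂ) η (Sum.inr (Sum.inr q)) (Sum.inr (Sum.inl (one, true)))) = 0 := by
    intro q; simp [gaugedS]
  simp only [hz1, hz2, Finset.sum_const_zero, zero_add, add_zero]
  rw [Fintype.sum_prod_type]
  apply Finset.sum_congr rfl
  intro W _
  rw [Fintype.sum_bool]
  have h0 : S one W ≠ 0 := by
    rw [hS1]; exact_mod_cast (hd W).ne'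
  have hs1 : S W Z₁ = S Z₁ W := hSsymm.apply Z₁ W
  have hs2 : S W Z₂ = S Z₂ W := hSsymm.apply Z₂ W
  have hs3 : S W one = S one W := hSsymm.apply one W
  simp only [gaugedS, Matrix.of_apply, sg]
  simp only [if_true, if_false, Bool.cond_decide]
  rw [hs1, hs2, hs3]
  field_simp
  simp only [Bool.false_eq_true, ↓reduceIte]
  ring
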